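/- arXiv:1001.2409 — 3 statements merged into one kernel-verified Lean document; each statement's English description precedes it below -/
import Mathlib

section
/- Let ω(x,t) have continuous second derivatives in the half-plane x ≥ 0, satisfy the sine-Gordon equation ω_xx − ω_tt = sin ω, the boundary conditions ω(0,t) = ω₀(t) and ω_x(0,t) = ω₁(t) for −∞ < t < ∞, and the boundedness condition sup_{x≥0, t∈ℝ}(|ω_x(x,t)| + |ω_t(x,t)|) < ∞. Then cos ω(x,t) for x ≥ 0 is uniquely determined by the boundary data ω₀, ω₁: if ω̃ is another function with the same properties and the same boundary data, then cos ω̃(x,t) = cos ω(x,t) for all x ≥ 0 and t ∈ ℝ. -/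
open Set Function

/-- `ω` (with partial derivatives `ωx`, `ωt`) is a solution, with continuous second
derivatives in the half-plane `x ≥ 0`, of the sine-Gordon equation in laboratory
coordinates `ω_xx − ω_tt = sin ω`. -/
def IsSGSolution (ω ωx ωt : ℝ → ℝ → ℝ) : Prop :=
  ContDiffOn ℝ 2 (uncurry ω) (Ici 0 ×ˢ univ) ∧
  (∀ t : ℝ, ∀ x ∈ Ici (0 : ℝ), HasDerivWithinAt (fun s => ω s t) (ωx x t) (Ici 0) x) ∧
  (∀ x ∈ Ici (0 : ℝ), ∀ t : ℝ, HasDerivAt (fun s => ω x s) (ωt x t) t) ∧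
  ∃ ωxx ωtt : ℝ → ℝ → ℝ,
    (∀ t : ℝ, ∀ x ∈ Ici (0 : ℝ), HasDerivWithinAt (fun s => ωx s t) (ωxx x t) (Ici 0) x) ∧
    (∀ x ∈ Ici (0 : ℝ), ∀ t : ℝ, HasDerivAt (fun s => ωt x s) (ωtt x t) t) ∧
    (∀ x ∈ Ici (0 : ℝ), ∀ t : ℝ, ωxx x t - ωtt x t = Real.sin (ω x t))

lemma my_mvt {g g' : ℝ → ℝ} {x : ℝ} (hx : 0 ≤ x)
    (hg : ∀ σ ∈ Ici (0:ℝ), HasDerivWithinAt g (g' σ) (Ici 0) σ)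
    {A : ℝ} {m : ℕ}
    (hle : ∀ σ ∈ Ici (0:ℝ), |g' σ| ≤ A * σ ^ m / m.factorial)
    (h0 : g 0 = 0) : |g x| ≤ A * x ^ (m+1) / (m+1).factorial := by
  have hfacm : ((m.factorial : ℝ)) ≠ 0 := Nat.cast_ne_zero.2 m.factorial_ne_zero
  have hfacm1 : (((m+1).factorial : ℝ)) ≠ 0 := Nat.cast_ne_zero.2 (m+1).factorial_ne_zero
  have hB : ∀ σ : ℝ, HasDerivAt (fun σ : ℝ => A * σ ^ (m+1) / (m+1).factorial)
      (A * σ ^ m / m.factorial) σ := by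
    intro σ
    have h := (hasDerivAt_pow (m+1) σ).const_mul (A / ((m+1).factorial : ℝ))
    have he : A / ((m+1).factorial:ℝ) * (((m+1):ℕ) * σ ^ (m+1-1)) = A * σ ^ m / m.factorial := by
      rw [Nat.factorial_succ]
      push_cast
      field_simp
    rw [he] at h
    refine h.congr_of_eventuallyEq (Filter.Eventually.of_forall fun σ => ?_)
    ring
  have key := image_norm_le_of_norm_deriv_right_le_deriv_boundary
    (f := g) (f' := g') (a := 0) (b := x)
    (fun σ hσ => ((hg σ hσ.1).mono Icc_subset_Ici_self).continuousWithinAt)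
    (fun σ hσ => (hg σ hσ.1).mono (Ici_subset_Ici.2 hσ.1))
    (by simp [h0, Real.norm_eq_abs])
    hB
    (fun σ hσ => by rw [Real.norm_eq_abs]; exact hle σ hσ.1)
  simpa [Real.norm_eq_abs] using key ⟨hx, le_rfl⟩

lemma sin_lip (a b : ℝ) : |Real.sin a - Real.sin b| ≤ |a - b| := by
  rw [Real.sin_sub_sin]
  calc |2 * Real.sin ((a-b)/2) * Real.cos ((a+b)/2)|
      = 2 * |Real.sin ((a-b)/2)| * |Real.cos ((a+b)/2)| := by
        rw [abs_mul, abs_mul, abs_two]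
    _ ≤ 2 * |(a-b)/2| * 1 := by
        have h1 := Real.abs_sin_le_abs (x := (a-b)/2)
        have h2 := Real.abs_cos_le_one ((a+b)/2)
        have h3 : (0:ℝ) ≤ |Real.sin ((a-b)/2)| := abs_nonneg _
        nlinarith
    _ = |a - b| := by rw [abs_div, abs_two]; ring

lemma sg_char {ω ωx ωt : ℝ → ℝ → ℝ} (h : IsSGSolution ω ωx ωt)
    (ε c : ℝ) (hε : ε = 1 ∨ ε = -1) :
    ∀ σ ∈ Ici (0:ℝ), HasDerivWithinAt
      (fun σ => ωx σ (c + ε*σ) - ε * ωt σ (c + ε*σ))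
      (Real.sin (ω σ (c + ε*σ))) (Ici 0) σ := by
  obtain ⟨hC2, hωx, hωt, ωxx, ωtt, hωxx, hωtt, heqn⟩ := h
  set S : Set (ℝ×ℝ) := (Ici (0:ℝ)) ×ˢ (univ : Set ℝ) with hSdef
  have hUD : UniqueDiffOn ℝ S := (uniqueDiffOn_Ici 0).prod uniqueDiffOn_univ
  have hconv : Convex ℝ S := (convex_Ici 0).prod convex_univ
  have hint : interior S = (Ioi (0:ℝ)) ×ˢ (univ : Set ℝ) := by
    rw [hSdef, interior_prod_eq, interior_Ici, interior_univ]
  set F := fderivWithin ℝ (uncurry ω) S with hFdef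
  have hdiff : DifferentiableOn ℝ (uncurry ω) S := hC2.differentiableOn (by norm_num)
  have hF : ∀ p ∈ S, HasFDerivWithinAt (uncurry ω) (F p) S p :=
    fun p hp => (hdiff p hp).hasFDerivWithinAt
  have hFC1 : ContDiffOn ℝ 1 F S := hC2.fderivWithin hUD (by norm_num)
  set G := fderivWithin ℝ F S with hGdef
  have hG : ∀ p ∈ S, HasFDerivWithinAt F (G p) S p :=
    fun p hp => ((hFC1.differentiableOn (by norm_num)) p hp).hasFDerivWithinAt
  have hmem : ∀ a : ℝ, 0 ≤ a → ∀ b : ℝ, ((a, b) : ℝ × ℝ) ∈ S := fun a ha b => ⟨ha, mem_univ _⟩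
  -- slice derivatives in x-direction
  have hslice : ∀ x ∈ Ici (0:ℝ), ∀ t : ℝ, ∀ (g : ℝ × ℝ → ℝ) (g' : (ℝ×ℝ) →L[ℝ] ℝ),
      HasFDerivWithinAt g g' S (x, t) →
      HasDerivWithinAt (fun s => g (s, t)) (g' (1, 0)) (Ici 0) x := by
    intro x hx t g g' hg
    have hι : HasDerivWithinAt (fun s : ℝ => ((s, t) : ℝ × ℝ)) ((1:ℝ), (0:ℝ)) (Ici 0) x :=
      HasDerivWithinAt.prodMk (hasDerivWithinAt_id x _) (hasDerivWithinAt_const x _ t)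
    exact hg.comp_hasDerivWithinAt x hι fun s hs => hmem s hs t
  have htslice : ∀ x ∈ Ici (0:ℝ), ∀ t : ℝ, ∀ (g : ℝ × ℝ → ℝ) (g' : (ℝ×ℝ) →L[ℝ] ℝ),
      HasFDerivWithinAt g g' S (x, t) →
      HasDerivAt (fun s => g (x, s)) (g' (0, 1)) t := by
    intro x hx t g g' hg
    have hι : HasDerivAt (fun s : ℝ => ((x, s) : ℝ × ℝ)) ((0:ℝ), (1:ℝ)) t :=
      HasDerivAt.prodMk (hasDerivAt_const t x) (hasDerivAt_id t)
    rw [← hasDerivWithinAt_univ] at hι ⊢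
    exact hg.comp_hasDerivWithinAt t hι fun s _ => hmem x hx s
  have hx_eq : ∀ x ∈ Ici (0:ℝ), ∀ t : ℝ, F (x, t) (1, 0) = ωx x t := by
    intro x hx t
    exact (uniqueDiffOn_Ici 0 x hx).eq_deriv _
      (hslice x hx t _ _ (hF (x,t) (hmem x hx t))) (hωx t x hx)
  have ht_eq : ∀ x ∈ Ici (0:ℝ), ∀ t : ℝ, F (x, t) (0, 1) = ωt x t := by
    intro x hx t
    exact (htslice x hx t _ _ (hF (x,t) (hmem x hx t))).unique (hωt x hx t)
  have hsymm : ∀ p ∈ S, ∀ u w : ℝ × ℝ, G p u w = G p w u := by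
    intro p hp u w
    refine hconv.second_derivative_within_at_symmetric (f := uncurry ω) (f' := F)
      (f'' := G p) ?_ ?_ hp ?_ u w
    · exact ⟨((1:ℝ), (0:ℝ)), by rw [hint]; exact ⟨by norm_num, mem_univ _⟩⟩
    · intro q hq
      exact (hF q (interior_subset hq)).hasFDerivAt (mem_interior_iff_mem_nhds.1 hq)
    · exact (hG p hp).mono interior_subset
  have hGxx : ∀ x ∈ Ici (0:ℝ), ∀ t : ℝ, G (x, t) (1, 0) (1, 0) = ωxx x t := by
    intro x hx t
    have h1 : HasDerivWithinAt (fun s => F (s, t)) (G (x,t) (1,0)) (Ici 0) x := by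
      have hι : HasDerivWithinAt (fun s : ℝ => ((s, t) : ℝ × ℝ)) ((1:ℝ), (0:ℝ)) (Ici 0) x :=
        HasDerivWithinAt.prodMk (hasDerivWithinAt_id x _) (hasDerivWithinAt_const x _ t)
      exact (hG (x,t) (hmem x hx t)).comp_hasDerivWithinAt x hι fun s hs => hmem s hs t
    have h2 : HasDerivWithinAt (fun s => F (s, t) (1, 0)) (G (x,t) (1,0) (1,0)) (Ici 0) x := by
      simpa using h1.clm_apply (hasDerivWithinAt_const x _ ((1:ℝ), (0:ℝ)))
    have h3 : HasDerivWithinAt (fun s => ωx s t) (G (x,t) (1,0) (1,0)) (Ici 0) x :=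
      h2.congr (fun s hs => (hx_eq s hs t).symm) (hx_eq x hx t).symm
    exact (uniqueDiffOn_Ici 0 x hx).eq_deriv _ h3 (hωxx t x hx)
  have hGtt : ∀ x ∈ Ici (0:ℝ), ∀ t : ℝ, G (x, t) (0, 1) (0, 1) = ωtt x t := by
    intro x hx t
    have h1 : HasDerivAt (fun s => F (x, s)) (G (x,t) (0,1)) t := by
      have hι : HasDerivAt (fun s : ℝ => ((x, s) : ℝ × ℝ)) ((0:ℝ), (1:ℝ)) t :=
        HasDerivAt.prodMk (hasDerivAt_const t x) (hasDerivAt_id t)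
      rw [← hasDerivWithinAt_univ] at hι ⊢
      exact (hG (x,t) (hmem x hx t)).comp_hasDerivWithinAt t hι fun s _ => hmem x hx s
    have h2 : HasDerivAt (fun s => F (x, s) (0, 1)) (G (x,t) (0,1) (0,1)) t := by
      simpa using h1.clm_apply (hasDerivAt_const t ((0:ℝ), (1:ℝ)))
    have h3 : HasDerivAt (fun s => ωt x s) (G (x,t) (0,1) (0,1)) t := by
      refine h2.congr_of_eventuallyEq ?_
      filter_upwards with s using (ht_eq x hx s).symm
    exact h3.unique (hωtt x hx t)
  -- the characteristic computation
  intro σ hσ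
  have hp : ((σ, c + ε*σ) : ℝ × ℝ) ∈ S := hmem σ hσ _
  have hγ : HasDerivWithinAt (fun σ : ℝ => ((σ, c + ε*σ) : ℝ × ℝ)) ((1:ℝ), ε) (Ici 0) σ := by
    refine HasDerivWithinAt.prodMk (hasDerivWithinAt_id σ _) ?_
    simpa using ((hasDerivWithinAt_id σ (Ici (0:ℝ))).const_mul ε).const_add c
  have step1 : HasDerivWithinAt (fun σ : ℝ => F (σ, c + ε*σ)) (G (σ, c+ε*σ) (1, ε)) (Ici 0) σ :=
    (hG _ hp).comp_hasDerivWithinAt σ hγ fun s hs => hmem s hs _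
  have step2 : HasDerivWithinAt (fun σ : ℝ => F (σ, c + ε*σ) ((1:ℝ), -ε))
      (G (σ, c+ε*σ) (1, ε) (1, -ε)) (Ici 0) σ := by
    simpa using step1.clm_apply (hasDerivWithinAt_const σ _ ((1:ℝ), -ε))
  have e1 : ((1:ℝ), ε) = ((1:ℝ), (0:ℝ)) + ε • ((0:ℝ), (1:ℝ)) := by
    simp [Prod.ext_iff]
  have e2 : ((1:ℝ), -ε) = ((1:ℝ), (0:ℝ)) - ε • ((0:ℝ), (1:ℝ)) := by
    simp [Prod.ext_iff]
  have hval : G (σ, c+ε*σ) (1, ε) (1, -ε) = Real.sin (ω σ (c + ε*σ)) := by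
    rw [e1, e2, map_add, map_smul]
    have hε2 : ε * ε = 1 := by rcases hε with h | h <;> rw [h] <;> norm_num
    have hcross := hsymm _ hp ((1:ℝ), (0:ℝ)) ((0:ℝ), (1:ℝ))
    simp only [ContinuousLinearMap.add_apply, ContinuousLinearMap.smul_apply, map_sub, map_smul,
      smul_eq_mul]
    rw [hcross, hGxx σ hσ _, hGtt σ hσ _, ← heqn σ hσ (c + ε*σ)]
    linear_combination (-(ωtt σ (c + ε * σ))) * hε2
  have h4 := step2.congr (f₁ := fun σ : ℝ => ωx σ (c + ε*σ) - ε * ωt σ (c + ε*σ))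
    (fun s hs => by rw [e2, map_sub, map_smul, hx_eq s hs _, ht_eq s hs _]; simp)
    (by rw [e2, map_sub, map_smul, hx_eq σ hσ _, ht_eq σ hσ _]; simp)
  rw [hval] at h4; exact h4

/-- Theorem `TmSG` (uniqueness part): a bounded-derivative solution of the
sine-Gordon equation `ω_xx − ω_tt = sin ω` on `x ≥ 0` has `cos ω(x,t)` uniquely
determined by the boundary data `ω(0,·)` and `ω_x(0,·)`. -/
theorem sineGordon_cos_unique_from_boundary_data
    (ω ωx ωt ω' ωx' ωt' : ℝ → ℝ → ℝ) (ω₀ ω₁ : ℝ → ℝ)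
    (hω : IsSGSolution ω ωx ωt) (hω' : IsSGSolution ω' ωx' ωt')
    (hbdd : ∃ C : ℝ, ∀ x ∈ Ici (0 : ℝ), ∀ t : ℝ, |ωx x t| + |ωt x t| ≤ C)
    (hbdd' : ∃ C : ℝ, ∀ x ∈ Ici (0 : ℝ), ∀ t : ℝ, |ωx' x t| + |ωt' x t| ≤ C)
    (hbc : ∀ t : ℝ, ω 0 t = ω₀ t ∧ ωx 0 t = ω₁ t)
    (hbc' : ∀ t : ℝ, ω' 0 t = ω₀ t ∧ ωx' 0 t = ω₁ t) :
    ∀ x ∈ Ici (0 : ℝ), ∀ t : ℝ, Real.cos (ω' x t) = Real.cos (ω x t) := by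
  obtain ⟨C1, hC1⟩ := hbdd
  obtain ⟨C2, hC2⟩ := hbdd'
  set C := C1 + C2 with hCdef
  -- difference slices
  have hvx : ∀ t : ℝ, ∀ x ∈ Ici (0:ℝ), HasDerivWithinAt (fun s => ω s t - ω' s t)
      (ωx x t - ωx' x t) (Ici 0) x :=
    fun t x hx => (hω.2.1 t x hx).sub (hω'.2.1 t x hx)
  -- boundary values
  have hv0 : ∀ s : ℝ, ω 0 s - ω' 0 s = 0 := fun s => by rw [(hbc s).1, (hbc' s).1, sub_self]
  have hωx0 : ∀ s : ℝ, ωx 0 s = ωx' 0 s := fun s => by rw [(hbc s).2, (hbc' s).2]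
  have hωt0 : ∀ s : ℝ, ωt 0 s = ωt' 0 s := by
    intro s
    have h1 := hω.2.2.1 0 self_mem_Ici s
    have h2 := hω'.2.2.1 0 self_mem_Ici s
    have hfe : (fun u => ω 0 u) = fun u => ω' 0 u :=
      funext fun u => by rw [(hbc u).1, (hbc' u).1]
    rw [hfe] at h1
    exact h1.unique h2
  -- the key induction
  have main : ∀ n : ℕ, ∀ x ∈ Ici (0:ℝ), ∀ t : ℝ,
      |ω x t - ω' x t| ≤ C * x ^ (2*n+1) / (2*n+1).factorial := by
    intro n
    induction n with
    | zero =>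
      intro x hx t
      have hb : ∀ σ ∈ Ici (0:ℝ), |ωx σ t - ωx' σ t| ≤ C * σ ^ 0 / Nat.factorial 0 := by
        intro σ hσ
        have ha := hC1 σ hσ t
        have hb := hC2 σ hσ t
        have h3 : |ωx σ t - ωx' σ t| ≤ |ωx σ t| + |ωx' σ t| := abs_sub _ _
        have h4 : (0:ℝ) ≤ |ωt σ t| := abs_nonneg _
        have h5 : (0:ℝ) ≤ |ωt' σ t| := abs_nonneg _
        simp only [pow_zero, Nat.factorial_zero, Nat.cast_one, mul_one, div_one]
        linarith
      have := my_mvt hx (fun σ hσ => hvx t σ hσ) hb (hv0 t)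
      simpa using this
    | succ n ih =>
      -- first, bound the x-derivative of the difference
      have hvxb : ∀ x ∈ Ici (0:ℝ), ∀ t : ℝ,
          |ωx x t - ωx' x t| ≤ C * x ^ (2*n+2) / (2*n+2).factorial := by
        intro x hx t
        have hr : ∀ ε : ℝ, ε = 1 ∨ ε = -1 →
            |ωx x t - ε * ωt x t - (ωx' x t - ε * ωt' x t)| ≤
              C * x ^ (2*n+2) / (2*n+2).factorial := by
          intro ε hε
          set c := t - ε * x with hcdef
          have hg : ∀ σ ∈ Ici (0:ℝ), HasDerivWithinAt
              (fun σ => (ωx σ (c+ε*σ) - ε * ωt σ (c+ε*σ)) -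
                (ωx' σ (c+ε*σ) - ε * ωt' σ (c+ε*σ)))
              (Real.sin (ω σ (c+ε*σ)) - Real.sin (ω' σ (c+ε*σ))) (Ici 0) σ :=
            fun σ hσ => (sg_char hω ε c hε σ hσ).sub (sg_char hω' ε c hε σ hσ)
          have h0 : (ωx 0 (c+ε*0) - ε * ωt 0 (c+ε*0)) -
              (ωx' 0 (c+ε*0) - ε * ωt' 0 (c+ε*0)) = 0 := by
            rw [hωx0, hωt0]; ring
          have hbound : ∀ σ ∈ Ici (0:ℝ),
              |Real.sin (ω σ (c+ε*σ)) - Real.sin (ω' σ (c+ε*σ))| ≤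
                C * σ ^ (2*n+1) / (2*n+1).factorial := by
            intro σ hσ
            refine le_trans ?_ (ih σ hσ (c+ε*σ))
            exact sin_lip _ _
          have key := my_mvt hx hg hbound h0
          have hct : c + ε * x = t := by rw [hcdef]; ring
          simp only [hct] at key
          have hee : 2*n+2 = 2*n+1+1 := by ring
          rw [hee]
          exact key
        have h1 := hr 1 (Or.inl rfl)
        have h2 := hr (-1) (Or.inr rfl)
        have habs : |ωx x t - ωx' x t| ≤
            (|ωx x t - 1 * ωt x t - (ωx' x t - 1 * ωt' x t)| +
             |ωx x t - (-1) * ωt x t - (ωx' x t - (-1) * ωt' x t)|) / 2 := by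
          have := abs_add_le (ωx x t - 1 * ωt x t - (ωx' x t - 1 * ωt' x t))
            (ωx x t - (-1) * ωt x t - (ωx' x t - (-1) * ωt' x t))
          have he : ωx x t - ωx' x t =
              ((ωx x t - 1 * ωt x t - (ωx' x t - 1 * ωt' x t)) +
               (ωx x t - (-1) * ωt x t - (ωx' x t - (-1) * ωt' x t))) / 2 := by ring
          rw [he, abs_div, abs_two]
          linarith
        linarith
      intro x hx t
      have key := my_mvt hx (fun σ hσ => hvx t σ hσ) (fun σ hσ => hvxb σ hσ t) (hv0 t)
      have hee : 2*(n+1)+1 = 2*n+2+1 := by ring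
      rw [hee]
      exact key
  -- pass to the limit
  intro x hx t
  have hlim : Filter.Tendsto (fun n : ℕ => C * x ^ (2*n+1) / (2*n+1).factorial)
      Filter.atTop (nhds 0) := by
    have h1 : Filter.Tendsto (fun k : ℕ => x ^ k / k.factorial) Filter.atTop (nhds 0) :=
      FloorSemiring.tendsto_pow_div_factorial_atTop x
    have h2 : Filter.Tendsto (fun n : ℕ => 2*n+1) Filter.atTop Filter.atTop :=
      Filter.tendsto_atTop_atTop.2 fun b => ⟨b, fun a ha => by omega⟩
    have h3 := (h1.comp h2).const_mul C
    simpa [Function.comp, mul_div_assoc] using h3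
  have hle0 : |ω x t - ω' x t| ≤ 0 :=
    ge_of_tendsto hlim (Filter.Eventually.of_forall fun n => main n x hx t)
  have : ω' x t = ω x t := by
    have := abs_nonneg (ω x t - ω' x t)
    have h4 : |ω x t - ω' x t| = 0 := le_antisymm hle0 this
    have := abs_eq_zero.1 h4
    linarith [sub_eq_zero.1 this]
  rw [this]
end

section
/- Fix M > 0 and μ ∈ ℂ with Im μ < −M/4. Let W(x,μ) be a 2×2 matrix-valued differentiable function on [0,∞) satisfying W′(x,μ) = (iμ j + ξ(x,μ)) W(x,μ), where j = diag(1,−1) and ξ is a 2×2 matrix function with sup_{x ≥ 0} ‖ξ(x,μ)‖ < M/4. Then for every x ≥ 0 at which W(x,μ) is invertible, the derivative (d/dx)(W(x,μ)* j W(x,μ)) is a positive definite 2×2 matrix. -/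
open MeasureTheory Complex Set Matrix
open scoped Matrix.Norms.L2Operator ComplexOrder

/-- The signature matrix `j = diag(1,−1)`. -/
noncomputable def sgnJ : Matrix (Fin 2) (Fin 2) ℂ := !![1, 0; 0, -1]

lemma sgnJ_conjTranspose : sgnJᴴ = sgnJ := by
  ext i j; fin_cases i <;> fin_cases j <;> simp [sgnJ]

lemma sgnJ_mul_sgnJ : sgnJ * sgnJ = 1 := by
  ext i j; fin_cases i <;> fin_cases j <;>
    simp [sgnJ, Matrix.mul_apply, Fin.sum_univ_two]

lemma sgnJ_norm : ‖sgnJ‖ = 1 := by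
  have h := Matrix.l2_opNorm_conjTranspose_mul_self sgnJ
  rw [sgnJ_conjTranspose, sgnJ_mul_sgnJ, norm_one] at h
  nlinarith [norm_nonneg sgnJ]

-- quadratic form bound
lemma quad_bound (B : Matrix (Fin 2) (Fin 2) ℂ) (x : Fin 2 → ℂ) :
    ‖star x ⬝ᵥ (B *ᵥ x)‖ ≤ ‖B‖ * ‖(WithLp.equiv 2 (Fin 2 → ℂ)).symm x‖ ^ 2 := by
  set v : EuclideanSpace ℂ (Fin 2) := (WithLp.equiv 2 (Fin 2 → ℂ)).symm x with hv
  have h1 : star x ⬝ᵥ (B *ᵥ x) = inner ℂ v (toEuclideanCLM (n := Fin 2) (𝕜 := ℂ) B v) := by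
    rw [EuclideanSpace.inner_eq_star_dotProduct]
    rw [dotProduct_comm]; rfl
  rw [h1]
  calc ‖(inner ℂ v (toEuclideanCLM (n := Fin 2) (𝕜 := ℂ) B v) : ℂ)‖
      ≤ ‖v‖ * ‖toEuclideanCLM (n := Fin 2) (𝕜 := ℂ) B v‖ := norm_inner_le_norm _ _
    _ ≤ ‖v‖ * (‖B‖ * ‖v‖) := by
        gcongr
        exact (toEuclideanCLM (n := Fin 2) (𝕜 := ℂ) B).le_opNorm v
    _ = ‖B‖ * ‖v‖ ^ 2 := by ring

lemma posdef_conj {S Wm : Matrix (Fin 2) (Fin 2) ℂ} (hS : S.PosDef) (hW : IsUnit Wm) :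
    (Wmᴴ * S * Wm).PosDef := by
  refine Matrix.PosDef.of_dotProduct_mulVec_pos (Matrix.isHermitian_conjTranspose_mul_mul Wm hS.1) (fun x hx => ?_)
  have hWx : Wm *ᵥ x ≠ 0 := by
    intro h
    apply hx
    have hinj := Matrix.mulVec_injective_iff_isUnit.mpr hW
    exact hinj (h.trans (Matrix.mulVec_zero Wm).symm)
  have := hS.dotProduct_mulVec_pos hWx
  have hrw : star x ⬝ᵥ (Wmᴴ * S * Wm) *ᵥ x = star (Wm *ᵥ x) ⬝ᵥ S *ᵥ (Wm *ᵥ x) := by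
    rw [star_mulVec, ← Matrix.mulVec_mulVec, ← Matrix.mulVec_mulVec,
      Matrix.dotProduct_mulVec _ Wmᴴ, Matrix.vecMul_conjTranspose, star_star]
  rw [hrw]; exact this

/-- Formula (1.10): if `W′(x,μ) = (iμ j + ξ(x,μ)) W(x,μ)` with
`sup_{x≥0} ‖ξ(x,μ)‖ < M/4` (operator norm) and `Im μ < −M/4`, then
`(d/dx)(W(x,μ)* j W(x,μ)) > 0` wherever `W(x,μ)` is invertible. -/
theorem deriv_WstarJW_posDef
    (M : ℝ) (hM : 0 < M) (μ : ℂ) (hμ : μ.im < -(M / 4))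
    (W ξ : ℝ → Matrix (Fin 2) (Fin 2) ℂ)
    (hW : ∀ x ∈ Ici (0 : ℝ),
      HasDerivWithinAt W ((Complex.I * μ) • sgnJ * W x + ξ x * W x) (Ici 0) x)
    (hξ : ∃ c : ℝ, c < M / 4 ∧ ∀ x ∈ Ici (0 : ℝ), ‖ξ x‖ ≤ c) :
    ∀ x ∈ Ici (0 : ℝ), IsUnit (W x) →
      ∃ R : Matrix (Fin 2) (Fin 2) ℂ,
        HasDerivWithinAt (fun y => (W y)ᴴ * sgnJ * W y) R (Ici 0) x ∧ R.PosDef := by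
  obtain ⟨c, hc, hcb⟩ := hξ
  intro x hx hWx
  set A : Matrix (Fin 2) (Fin 2) ℂ := (Complex.I * μ) • sgnJ * W x + ξ x * W x with hA
  refine ⟨Aᴴ * sgnJ * W x + (W x)ᴴ * sgnJ * A, ?_, ?_⟩
  · have hW' := hW x hx
    have hstar : HasDerivWithinAt (fun y => (W y)ᴴ) Aᴴ (Ici 0) x := by have := hW'.star; exact this
    exact (hstar.mul_const sgnJ).mul hW'
  · -- algebraic identity
    set B : Matrix (Fin 2) (Fin 2) ℂ := (ξ x)ᴴ * sgnJ + sgnJ * ξ x with hB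
    set S : Matrix (Fin 2) (Fin 2) ℂ := ((-2 * μ.im : ℝ) : ℂ) • 1 + B with hS
    have hJJW : ∀ C : Matrix (Fin 2) (Fin 2) ℂ, sgnJ * (sgnJ * C) = C := by
      intro C; rw [← mul_assoc, sgnJ_mul_sgnJ, one_mul]
    have hRS : Aᴴ * sgnJ * W x + (W x)ᴴ * sgnJ * A = (W x)ᴴ * S * W x := by
      simp only [hA, hS, hB, conjTranspose_add, conjTranspose_smul, conjTranspose_mul,
        sgnJ_conjTranspose, Matrix.add_mul, Matrix.mul_add, Matrix.smul_mul, Matrix.mul_smul,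
        Matrix.mul_one, mul_assoc, hJJW]
      match_scalars
      all_goals (simp [Complex.ext_iff]; try ring)
    rw [hRS]
    -- S is positive definite
    have hBH : Bᴴ = B := by
      simp only [hB, conjTranspose_add, conjTranspose_mul, sgnJ_conjTranspose,
        conjTranspose_conjTranspose]
      abel
    have hSpd : S.PosDef := by
      refine Matrix.PosDef.of_dotProduct_mulVec_pos ?_ ?_
      · show Sᴴ = S
        simp only [hS, conjTranspose_add, conjTranspose_smul, conjTranspose_one, hBH,
          Complex.star_def, Complex.conj_ofReal]
      · intro y hy
        set v : EuclideanSpace ℂ (Fin 2) := (WithLp.equiv 2 (Fin 2 → ℂ)).symm y with hv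
        have hv0 : v ≠ 0 := by rw [hv]; simpa using hy
        have hvpos : 0 < ‖v‖ := norm_pos_iff.mpr hv0
        have hqb : ‖star y ⬝ᵥ (B *ᵥ y)‖ ≤ ‖B‖ * ‖v‖ ^ 2 := quad_bound B y
        have hqreal : star (star y ⬝ᵥ (B *ᵥ y)) = star y ⬝ᵥ (B *ᵥ y) := by
          calc star (star y ⬝ᵥ (B *ᵥ y)) = star (star (star (B *ᵥ y) ⬝ᵥ y)) := by
                rw [star_dotProduct]
            _ = star (B *ᵥ y) ⬝ᵥ y := by rw [star_star]
            _ = (star y ᵥ* Bᴴ) ⬝ᵥ y := by rw [star_mulVec]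
            _ = star y ⬝ᵥ (Bᴴ *ᵥ y) := (Matrix.dotProduct_mulVec _ _ _).symm
            _ = star y ⬝ᵥ (B *ᵥ y) := by rw [hBH]
        set q : ℂ := star y ⬝ᵥ (B *ᵥ y) with hq
        have hqim : q.im = 0 := by
          have := congrArg Complex.im hqreal
          simp at this; linarith
        have hdot : star y ⬝ᵥ y = ((‖v‖ : ℂ)) ^ 2 := by
          have := inner_self_eq_norm_sq_to_K (𝕜 := ℂ) v
          rw [EuclideanSpace.inner_eq_star_dotProduct] at this
          rw [dotProduct_comm] at this; exact this
        have hquad : star y ⬝ᵥ (S *ᵥ y) = ((-2 * μ.im : ℝ) : ℂ) * ((‖v‖ : ℂ)) ^ 2 + q := by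
          simp only [hS, Matrix.add_mulVec, Matrix.smul_mulVec, Matrix.one_mulVec,
            dotProduct_add, dotProduct_smul, smul_eq_mul, hdot, hq]
        have hBnorm : ‖B‖ ≤ 2 * c := by
          have h1 : ‖(ξ x)ᴴ * sgnJ‖ ≤ ‖(ξ x)ᴴ‖ * ‖sgnJ‖ := norm_mul_le _ _
          have h2 : ‖sgnJ * ξ x‖ ≤ ‖sgnJ‖ * ‖ξ x‖ := norm_mul_le _ _
          have h3 : ‖(ξ x)ᴴ‖ = ‖ξ x‖ := Matrix.l2_opNorm_conjTranspose _
          have h4 := hcb x hx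
          have h5 : ‖B‖ ≤ ‖(ξ x)ᴴ‖ * ‖sgnJ‖ + ‖sgnJ‖ * ‖ξ x‖ :=
            (norm_add_le _ _).trans (add_le_add h1 h2)
          rw [h3, sgnJ_norm] at h5
          linarith
        have hc0 : 0 ≤ c := le_trans (norm_nonneg _) (hcb x hx)
        have hqre : -(‖B‖ * ‖v‖ ^ 2) ≤ q.re := by
          have h1 : -‖q‖ ≤ q.re := neg_abs_le q.re |>.trans' (by
            have := Complex.abs_re_le_norm q
            linarith [abs_nonneg q.re])
          linarith
        rw [hquad, Complex.lt_def]
        constructor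
        · simp only [Complex.add_re, Complex.zero_re, Complex.mul_re, Complex.ofReal_re,
            Complex.ofReal_im]
          have hvsq : (0:ℝ) < ‖v‖ ^ 2 := by positivity
          have h5 : ((‖v‖ : ℂ)) ^ 2 = ((‖v‖ ^ 2 : ℝ) : ℂ) := by push_cast; ring
          rw [h5]
          simp only [Complex.ofReal_re, Complex.ofReal_im]
          nlinarith [hqb, hqre]
        · have h5 : ((‖v‖ : ℂ)) ^ 2 = ((‖v‖ ^ 2 : ℝ) : ℂ) := by push_cast; ring
          rw [h5]
          simp only [Complex.zero_im, Complex.add_im, Complex.mul_im, Complex.ofReal_im,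
            Complex.ofReal_re, hqim]
          ring
    exact posdef_conj hSpd hWx
end

section
/- Fix l > 0, M > 0 and μ with Im μ < −M/4, and let 𝔄 = {𝔄_{jp}}_{j,p=1}^2 be a 2×2 complex matrix satisfying 𝔄* j 𝔄 < j (strict matrix inequality), where j = diag(1,−1), and such that 𝔄 = Q(0)W(l,μ)^{−1} with W(x,μ) solving W′ = (iμj + ξ(x,μ))W, W(0,μ) = Q(0) unitary, sup_x ‖ξ(x,μ)‖ < M/4. For |θ| ≤ 1 and |θ̆| ≤ 1, set ψ = (𝔄_{11}θ + 𝔄_{12})/(𝔄_{21}θ + 𝔄_{22}) and ψ̆ = (𝔄_{11}θ̆ + 𝔄_{12})/(𝔄_{21}θ̆ + 𝔄_{22}). Then both transforms are well defined, |ψ| < 1 and |ψ̆| < 1, and |ψ − ψ̆| ≤ 2 exp((i(conj μ − μ) + M/2)·l) = 2 exp((2 Im μ + M/2)·l). -/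
open MeasureTheory Complex Set Matrix
open scoped Matrix.Norms.L2Operator ComplexOrder

section Aux

/-- Quadratic form bound via the `L²` operator norm. -/
lemma dot_bound (A : Matrix (Fin 2) (Fin 2) ℂ) (x y : Fin 2 → ℂ) :
    ‖star x ⬝ᵥ A *ᵥ y‖ ≤ ‖A‖ * (Real.sqrt (‖x 0‖^2 + ‖x 1‖^2) * Real.sqrt (‖y 0‖^2 + ‖y 1‖^2)) := by
  set x' : EuclideanSpace ℂ (Fin 2) := (EuclideanSpace.equiv (Fin 2) ℂ).symm x with hx'
  set z' : EuclideanSpace ℂ (Fin 2) := (EuclideanSpace.equiv (Fin 2) ℂ).symm (A *ᵥ y) with hz'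
  set y' : EuclideanSpace ℂ (Fin 2) := (EuclideanSpace.equiv (Fin 2) ℂ).symm y with hy'
  have hx : star x ⬝ᵥ A *ᵥ y = @inner ℂ _ _ x' z' := by
    simp [PiLp.inner_apply, dotProduct, RCLike.inner_apply, hx', hz']; ring
  rw [hx]
  have h1 : ‖@inner ℂ _ _ x' z'‖ ≤ ‖x'‖ * ‖z'‖ := norm_inner_le_norm _ _
  have h2 : ‖z'‖ ≤ ‖A‖ * ‖y'‖ := A.l2_opNorm_mulVec _
  have h3 : ‖x'‖ = Real.sqrt (‖x 0‖^2 + ‖x 1‖^2) := by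
    rw [EuclideanSpace.norm_eq]; simp [Fin.sum_univ_two]; rfl
  have h4 : ‖y'‖ = Real.sqrt (‖y 0‖^2 + ‖y 1‖^2) := by
    rw [EuclideanSpace.norm_eq]; simp [Fin.sum_univ_two]; rfl
  calc ‖@inner ℂ _ _ x' z'‖ ≤ ‖x'‖ * ‖z'‖ := h1
    _ ≤ ‖x'‖ * (‖A‖ * ‖y'‖) := by
        nlinarith [norm_nonneg x', norm_nonneg z', norm_nonneg y', norm_nonneg A]
    _ = ‖A‖ * (Real.sqrt (‖x 0‖^2 + ‖x 1‖^2) * Real.sqrt (‖y 0‖^2 + ‖y 1‖^2)) := by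
        rw [h3, h4]; ring

lemma entry_bound (A : Matrix (Fin 2) (Fin 2) ℂ) (i j : Fin 2) : ‖A i j‖ ≤ ‖A‖ := by
  have h := dot_bound A (fun k => if k = i then 1 else 0) (fun k => if k = j then 1 else 0)
  fin_cases i <;> fin_cases j <;>
    simpa [dotProduct, Matrix.mulVec, Fin.sum_univ_two, Real.sqrt_one] using h

lemma key_bound (A : Matrix (Fin 2) (Fin 2) ℂ) :
    |(A 0 0 - A 1 1).re| + ‖(starRingEnd ℂ) (A 0 1) - A 1 0‖ ≤ 2 * ‖A‖ := by
  set s : ℂ := (starRingEnd ℂ) (A 0 1) - A 1 0 with hs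
  have key : ∀ u : ℂ, ‖u‖ = 1 →
      |(A 0 0 - A 1 1).re - ((starRingEnd ℂ) u * s).re| ≤ 2 * ‖A‖ := by
    intro u hu
    have hd := dot_bound A ![1, u] ![1, -u]
    have hn1 : Real.sqrt (‖(1:ℂ)‖^2 + ‖u‖^2) = Real.sqrt 2 := by rw [hu]; norm_num
    have hn2 : Real.sqrt (‖(1:ℂ)‖^2 + ‖-u‖^2) = Real.sqrt 2 := by rw [norm_neg, hu]; norm_num
    simp only [Matrix.cons_val_zero, Matrix.cons_val_one, Matrix.head_cons] at hd
    rw [hn1, hn2, Real.mul_self_sqrt (by norm_num)] at hd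
    set E : ℂ := star ![1, u] ⬝ᵥ A *ᵥ ![1, -u] with hE
    have hEre : (A 0 0 - A 1 1).re - ((starRingEnd ℂ) u * s).re = E.re := by
      have h1 : (starRingEnd ℂ) u * u = (1:ℂ) := by
        rw [← Complex.normSq_eq_conj_mul_self, Complex.normSq_eq_norm_sq, hu]
        norm_num
      have hEval : E = A 0 0 + A 0 1 * (-u) +
          ((starRingEnd ℂ) u * (A 1 0) + (starRingEnd ℂ) u * (A 1 1 * (-u))) := by
        simp [hE, dotProduct, Matrix.mulVec, Fin.sum_univ_two, Matrix.cons_val_zero,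
          Matrix.cons_val_one, Matrix.head_cons]
        ring
      have hE2 : E = A 0 0 - A 1 1 + (A 0 1 * (-u) + (starRingEnd ℂ) u * A 1 0) := by
        rw [hEval]
        have h3 : (starRingEnd ℂ) u * (A 1 1 * (-u)) = -((starRingEnd ℂ) u * u) * A 1 1 := by ring
        rw [h3, h1]; ring
      rw [hE2, hs]
      simp [Complex.add_re, Complex.sub_re, Complex.mul_re, Complex.neg_re, Complex.neg_im,
        Complex.sub_im, Complex.conj_re, Complex.conj_im]
      ring
    rw [hEre]
    calc |E.re| ≤ ‖E‖ := Complex.abs_re_le_norm E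
      _ ≤ 2 * ‖A‖ := by rw [hE]; linarith [hd]
  rcases eq_or_ne s 0 with h0 | h0
  · rw [h0, norm_zero, add_zero]
    have := key 1 (by norm_num)
    simpa [h0] using this
  · set t := (A 0 0 - A 1 1).re
    have hu1 : ‖s / ((‖s‖:ℝ):ℂ)‖ = 1 := by
      rw [norm_div, Complex.norm_real, Real.norm_eq_abs, _root_.abs_of_nonneg (norm_nonneg s),
        div_self (norm_ne_zero_iff.mpr h0)]
    have h1 := key (s / (‖s‖:ℝ)) hu1
    have h2 := key (-(s / (‖s‖:ℝ))) (by rw [norm_neg]; exact hu1)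
    have hcs : ((starRingEnd ℂ) (s / (‖s‖:ℝ)) * s).re = ‖s‖ := by
      have habs : ‖s‖ ≠ 0 := by simpa using h0
      have heq : (starRingEnd ℂ) (s / (‖s‖:ℝ)) * s = ((‖s‖:ℝ):ℂ) := by
        rw [map_div₀, Complex.conj_ofReal, div_mul_eq_mul_div, ← Complex.normSq_eq_conj_mul_self,
          Complex.normSq_eq_norm_sq]
        push_cast
        field_simp
      rw [heq, Complex.ofReal_re]
    have hcs2 : ((starRingEnd ℂ) (-(s / (‖s‖:ℝ))) * s).re = -‖s‖ := by
      rw [map_neg, neg_mul, Complex.neg_re, hcs]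
    rw [hcs] at h1; rw [hcs2] at h2
    rcases le_or_gt 0 t with ht | ht
    · have habs2 : |t - -‖s‖| = t + ‖s‖ := by
        rw [_root_.abs_of_nonneg (by linarith [norm_nonneg s])]; ring
      rw [habs2] at h2
      calc |t| + ‖s‖ = t + ‖s‖ := by rw [_root_.abs_of_nonneg ht]
        _ ≤ 2 * ‖A‖ := h2
    · have habs1 : |t - ‖s‖| = -t + ‖s‖ := by
        rw [abs_of_nonpos (by linarith [norm_nonneg s])]; ring
      rw [habs1] at h1
      calc |t| + ‖s‖ = -t + ‖s‖ := by rw [abs_of_neg ht]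
        _ ≤ 2 * ‖A‖ := h1

/-- A function with nonnegative initial value whose derivative is nonnegative wherever the
function is nonpositive stays nonnegative. -/
lemma nonneg_of_deriv (l : ℝ) (f f' : ℝ → ℝ)
    (hf : ∀ x ∈ Icc (0:ℝ) l, HasDerivWithinAt f (f' x) (Icc 0 l) x)
    (h0 : 0 ≤ f 0) (hd : ∀ x ∈ Icc (0:ℝ) l, f x ≤ 0 → 0 ≤ f' x) :
    ∀ x ∈ Icc (0:ℝ) l, 0 ≤ f x := by
  intro t ht
  by_contra hneg
  push_neg at hneg
  have hcont : ContinuousOn f (Icc 0 l) := fun x hx => (hf x hx).continuousWithinAt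
  set K : Set ℝ := {x ∈ Icc 0 t | 0 ≤ f x} with hK
  have hKne : K.Nonempty := ⟨0, ⟨⟨le_refl _, ht.1⟩, h0⟩⟩
  have hKsub : K ⊆ Icc 0 t := fun x hx => hx.1
  have hKcl : IsClosed K := by
    have hKeq : K = Icc 0 t ∩ (Icc 0 l ∩ f ⁻¹' (Ici 0)) := by
      ext x; constructor
      · intro hx; exact ⟨hx.1, ⟨⟨hx.1.1, le_trans hx.1.2 ht.2⟩, hx.2⟩⟩
      · intro hx; exact ⟨hx.1, hx.2.2⟩
    rw [hKeq]
    exact isClosed_Icc.inter (hcont.preimage_isClosed_of_isClosed isClosed_Icc isClosed_Ici)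
  have hKcomp : IsCompact K := isCompact_Icc.of_isClosed_subset hKcl hKsub
  set a := sSup K with ha
  have haK : a ∈ K := hKcomp.sSup_mem hKne
  have haf : 0 ≤ f a := haK.2
  have hat : a ≤ t := haK.1.2
  have ha0 : 0 ≤ a := haK.1.1
  have halt : a < t := lt_of_le_of_ne hat (fun h => by rw [h] at haf; linarith)
  have hflt : ∀ x, a < x → x ≤ t → f x < 0 := by
    intro x hax hxt
    by_contra hge
    push_neg at hge
    have hxK : x ∈ K := ⟨⟨le_trans ha0 hax.le, hxt⟩, hge⟩
    have : x ≤ a := le_csSup hKcomp.bddAbove hxK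
    linarith
  have hmono : MonotoneOn f (Icc a t) := by
    apply monotoneOn_of_deriv_nonneg (convex_Icc a t)
    · exact hcont.mono (fun x hx => ⟨le_trans ha0 hx.1, le_trans hx.2 ht.2⟩)
    · intro x hx
      rw [interior_Icc] at hx
      have hxl : x ∈ Icc (0:ℝ) l := ⟨le_trans ha0 hx.1.le, le_trans hx.2.le ht.2⟩
      have hmem : Icc (0:ℝ) l ∈ nhds x :=
        Icc_mem_nhds (lt_of_le_of_lt ha0 hx.1) (lt_of_lt_of_le hx.2 ht.2)
      exact ((hf x hxl).hasDerivAt hmem).differentiableAt.differentiableWithinAt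
    · intro x hx
      rw [interior_Icc] at hx
      have hxl : x ∈ Icc (0:ℝ) l := ⟨le_trans ha0 hx.1.le, le_trans hx.2.le ht.2⟩
      have hmem : Icc (0:ℝ) l ∈ nhds x :=
        Icc_mem_nhds (lt_of_le_of_lt ha0 hx.1) (lt_of_lt_of_le hx.2 ht.2)
      have hda := (hf x hxl).hasDerivAt hmem
      rw [hda.deriv]
      exact hd x hxl (le_of_lt (hflt x hx.1 hx.2.le))
  have : f a ≤ f t := hmono ⟨le_refl a, hat⟩ ⟨halt.le, le_refl t⟩ hat
  linarith [hflt t halt (le_refl t)]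

lemma hasDerivWithinAt_normSq {f : ℝ → ℂ} {f' : ℂ} {s : Set ℝ} {x : ℝ}
    (hf : HasDerivWithinAt f f' s x) :
    HasDerivWithinAt (fun t => Complex.normSq (f t)) (2 * ((starRingEnd ℂ) (f x) * f').re) s x := by
  have hre : HasDerivWithinAt (fun t => (f t).re) f'.re s x :=
    (Complex.reCLM.hasFDerivAt).comp_hasDerivWithinAt x hf
  have him : HasDerivWithinAt (fun t => (f t).im) f'.im s x :=
    (Complex.imCLM.hasFDerivAt).comp_hasDerivWithinAt x hf
  have h : HasDerivWithinAt (fun t => (f t).re * (f t).re + (f t).im * (f t).im)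
      (f'.re * (f x).re + (f x).re * f'.re + (f'.im * (f x).im + (f x).im * f'.im)) s x :=
    (hre.mul hre).add (him.mul him)
  have heq : (2 : ℝ) * ((starRingEnd ℂ) (f x) * f').re
      = f'.re * (f x).re + (f x).re * f'.re + (f'.im * (f x).im + (f x).im * f'.im) := by
    simp [Complex.mul_re, Complex.conj_re, Complex.conj_im]
    ring
  rw [heq]
  have hfn : (fun t => Complex.normSq (f t))
      = fun t => (f t).re * (f t).re + (f t).im * (f t).im := by
    funext t; exact Complex.normSq_apply _
  rw [hfn]
  exact h

lemma entry_deriv {W : ℝ → Matrix (Fin 2) (Fin 2) ℂ} {W' : Matrix (Fin 2) (Fin 2) ℂ} {s : Set ℝ}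
    {x : ℝ} (h : HasDerivWithinAt W W' s x) (i j : Fin 2) :
    HasDerivWithinAt (fun t => W t i j) (W' i j) s x := by
  let L : Matrix (Fin 2) (Fin 2) ℂ →L[ℂ] ℂ := LinearMap.toContinuousLinearMap
    { toFun := fun M => M i j, map_add' := by intros; simp, map_smul' := by intros; simp }
  exact ((L.restrictScalars ℝ).hasFDerivAt).comp_hasDerivWithinAt x h

lemma conj_mul_self_mul_re (z w : ℂ) :
    ((starRingEnd ℂ) z * (w * z)).re = w.re * Complex.normSq z := by
  rw [show (starRingEnd ℂ) z * (w * z) = w * ((starRingEnd ℂ) z * z) by ring,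
    ← Complex.normSq_eq_conj_mul_self]
  simp [Complex.mul_re]

lemma aux_Imu (z w μ : ℂ) : ((starRingEnd ℂ) z * (I*μ*z + w)).re
    = -μ.im * Complex.normSq z + ((starRingEnd ℂ) z * w).re := by
  simp [Complex.mul_re, Complex.add_re, Complex.add_im, Complex.mul_im, Complex.I_re,
    Complex.I_im, Complex.conj_re, Complex.conj_im, Complex.normSq_apply]
  ring

lemma aux_nImu (z w μ : ℂ) : ((starRingEnd ℂ) z * (-(I*μ)*z + w)).re
    = μ.im * Complex.normSq z + ((starRingEnd ℂ) z * w).re := by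
  simp [Complex.mul_re, Complex.add_re, Complex.add_im, Complex.mul_im, Complex.I_re,
    Complex.I_im, Complex.conj_re, Complex.conj_im, Complex.normSq_apply, Complex.neg_re,
    Complex.neg_im]
  ring

lemma aux_N (a b c d z1 z2 : ℂ) :
    2*((starRingEnd ℂ) z1 * (a*z1 + b*z2)).re - 2*((starRingEnd ℂ) z2 * (c*z1 + d*z2)).re
      - (a+d).re * (Complex.normSq z1 - Complex.normSq z2)
    = (a - d).re * (Complex.normSq z1 + Complex.normSq z2)
      + 2*(((starRingEnd ℂ) b - c) * (z1 * (starRingEnd ℂ) z2)).re := by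
  simp [Complex.mul_re, Complex.add_re, Complex.add_im, Complex.mul_im, Complex.sub_re,
    Complex.sub_im, Complex.conj_re, Complex.conj_im, Complex.normSq_apply]
  ring

lemma complete_square (a b c d z : ℂ) :
    Complex.normSq (((Complex.normSq d - Complex.normSq c : ℝ) : ℂ) * z
        - (starRingEnd ℂ) ((starRingEnd ℂ) b * d - (starRingEnd ℂ) a * c))
    = (Complex.normSq d - Complex.normSq c) *
        (Complex.normSq (d * z - b) - Complex.normSq (a - c * z))
      + Complex.normSq (a * d - b * c) := by
  simp only [Complex.normSq_apply, Complex.sub_re, Complex.sub_im, Complex.mul_re, Complex.mul_im,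
    Complex.add_re, Complex.add_im, Complex.conj_re, Complex.conj_im, Complex.ofReal_re,
    Complex.ofReal_im]
  ring

lemma real_le_of_sq_le_sq {a b : ℝ} (hb : 0 ≤ b) (h : a^2 ≤ b^2) : a ≤ b := by
  by_contra hc
  push_neg at hc
  exact absurd h (not_le.mpr (pow_lt_pow_left₀ hc hb (by norm_num)))

end Aux

set_option maxHeartbeats 2000000

/-- Lemma 2.3 of [MST] (estimate (1.d11)): for `𝔄 = Q(0) W(l,μ)⁻¹` coming from
`W′ = (iμj + ξ)W`, `W(0,μ) = Q(0)` unitary, `sup_{x∈[0,l]} ‖ξ‖ < M/4`,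
`Im μ < −M/4`, and satisfying `𝔄* j 𝔄 < j`, the linear fractional transforms
`ψ = (𝔄₁₁θ + 𝔄₁₂)/(𝔄₂₁θ + 𝔄₂₂)` (|θ| ≤ 1) are well defined, take values in the
open unit disk, and any two of them satisfy
`|ψ − ψ̆| ≤ 2 exp((i(μ̄ − μ) + M/2) l) = 2 exp((2 Im μ + M/2) l)`. -/
theorem weyl_disk_estimate
    (l M : ℝ) (hl : 0 < l) (hM : 0 < M) (μ : ℂ) (hμ : μ.im < -(M / 4))
    (W ξ : ℝ → Matrix (Fin 2) (Fin 2) ℂ)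
    (hW : ∀ x ∈ Icc (0 : ℝ) l,
      HasDerivWithinAt W ((Complex.I * μ) • sgnJ * W x + ξ x * W x) (Icc 0 l) x)
    (hQ0 : (W 0)ᴴ * W 0 = 1)
    (hξ : ∃ c : ℝ, c < M / 4 ∧ ∀ x ∈ Icc (0 : ℝ) l, ‖ξ x‖ ≤ c)
    (hWl : IsUnit (W l))
    (𝔄 : Matrix (Fin 2) (Fin 2) ℂ) (h𝔄 : 𝔄 = W 0 * (W l)⁻¹)
    (hineq : (sgnJ - 𝔄ᴴ * sgnJ * 𝔄).PosDef)
    (θ θ' : ℂ) (hθ : ‖θ‖ ≤ 1) (hθ' : ‖θ'‖ ≤ 1) :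
    𝔄 1 0 * θ + 𝔄 1 1 ≠ 0 ∧ 𝔄 1 0 * θ' + 𝔄 1 1 ≠ 0 ∧
    ‖(𝔄 0 0 * θ + 𝔄 0 1) / (𝔄 1 0 * θ + 𝔄 1 1)‖ < 1 ∧
    ‖(𝔄 0 0 * θ' + 𝔄 0 1) / (𝔄 1 0 * θ' + 𝔄 1 1)‖ < 1 ∧
    ‖(𝔄 0 0 * θ + 𝔄 0 1) / (𝔄 1 0 * θ + 𝔄 1 1) -
        (𝔄 0 0 * θ' + 𝔄 0 1) / (𝔄 1 0 * θ' + 𝔄 1 1)‖ ≤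
      2 * Real.exp ((2 * μ.im + M / 2) * l) := by
  classical
  obtain ⟨c, hcM, hcb⟩ := hξ
  have h0mem : (0:ℝ) ∈ Icc (0:ℝ) l := ⟨le_refl 0, hl.le⟩
  have hlmem : l ∈ Icc (0:ℝ) l := ⟨hl.le, le_refl l⟩
  have hc0 : 0 ≤ c := le_trans (norm_nonneg _) (hcb 0 h0mem)
  set κ : ℝ := -2*μ.im - 2*c with hκ
  have hκpos : 0 < κ := by rw [hκ]; nlinarith
  -- the posdef quadratic form estimate
  have hquad : ∀ z : ℂ, ‖z‖ ≤ 1 →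
      Complex.normSq (𝔄 0 0 * z + 𝔄 0 1) < Complex.normSq (𝔄 1 0 * z + 𝔄 1 1) := by
    intro z hz
    have hv : (![z, 1] : Fin 2 → ℂ) ≠ 0 := by
      intro h
      have := congrFun h 1
      simp at this
    have h := hineq.dotProduct_mulVec_pos hv
    have heq : star ![z, 1] ⬝ᵥ ((sgnJ - 𝔄ᴴ * sgnJ * 𝔄) *ᵥ ![z, 1])
        = (((Complex.normSq z - 1) - Complex.normSq (𝔄 0 0 * z + 𝔄 0 1)
            + Complex.normSq (𝔄 1 0 * z + 𝔄 1 1) : ℝ) : ℂ) := by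
      simp only [sgnJ, dotProduct, Matrix.mulVec, Matrix.sub_apply, Matrix.mul_apply,
        Fin.sum_univ_two, Matrix.conjTranspose_apply, Pi.star_apply, RCLike.star_def,
        Matrix.cons_val', Matrix.cons_val_zero, Matrix.cons_val_one, Matrix.head_cons,
        Matrix.empty_val', Matrix.cons_val_fin_one, Matrix.head_fin_const]
      apply Complex.ext <;>
        simp [Complex.normSq_apply, Complex.add_re, Complex.add_im, Complex.mul_re,
          Complex.mul_im, Complex.sub_re, Complex.sub_im, Complex.conj_re, Complex.conj_im,
          Complex.ofReal_re, Complex.ofReal_im, Complex.one_re, Complex.one_im, Complex.neg_re,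
          Complex.neg_im] <;>
        ring
    rw [heq, Complex.zero_lt_real] at h
    have hz2 : Complex.normSq z ≤ 1 := by
      rw [Complex.normSq_eq_norm_sq]
      nlinarith [norm_nonneg z]
    linarith
  -- unitarity of W 0
  have hW0unit : W 0 * (W 0)ᴴ = 1 := mul_eq_one_comm.mp hQ0
  -- the vector y and the scalar functions
  set w0 : ℂ := (starRingEnd ℂ) (W 0 0 0) with hw0
  set w1 : ℂ := (starRingEnd ℂ) (W 0 0 1) with hw1
  set y1 : ℝ → ℂ := fun x => W x 0 0 * w0 + W x 0 1 * w1 with hy1def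
  set y2 : ℝ → ℂ := fun x => W x 1 0 * w0 + W x 1 1 * w1 with hy2def
  set y1d : ℝ → ℂ := fun x => I*μ*y1 x + (ξ x 0 0 * y1 x + ξ x 0 1 * y2 x) with hy1ddef
  set y2d : ℝ → ℂ := fun x => -(I*μ)*y2 x + (ξ x 1 0 * y1 x + ξ x 1 1 * y2 x) with hy2ddef
  set φf : ℝ → ℝ := fun x => Complex.normSq (y1 x) - Complex.normSq (y2 x) with hφdef
  set nnf : ℝ → ℝ := fun x => Complex.normSq (y1 x) + Complex.normSq (y2 x) with hnndef
  set φd : ℝ → ℝ := fun x =>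
    2*((starRingEnd ℂ) (y1 x) * y1d x).re - 2*((starRingEnd ℂ) (y2 x) * y2d x).re with hφddef
  set Df : ℝ → ℂ := fun x => W x 0 0 * W x 1 1 - W x 0 1 * W x 1 0 with hDdef
  set Sf : ℝ → ℝ := fun x => (φf x)^2 * Real.exp (-(2*κ)*x) - Complex.normSq (Df x) with hSdef
  set Sd : ℝ → ℝ := fun x => (2*(φf x)*(φd x) - 2*κ*(φf x)^2) * Real.exp (-(2*κ)*x)
    - 2*((ξ x 0 0 + ξ x 1 1).re)*Complex.normSq (Df x) with hSddef
  -- initial values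
  have hy10 : y1 0 = 1 := by
    have h := congrFun (congrFun hW0unit 0) 0
    simp only [Matrix.mul_apply, Matrix.conjTranspose_apply, Fin.sum_univ_two,
      Matrix.one_apply_eq, RCLike.star_def] at h
    show W 0 0 0 * w0 + W 0 0 1 * w1 = 1
    rw [hw0, hw1]
    exact h
  have hy20 : y2 0 = 0 := by
    have h := congrFun (congrFun hW0unit 1) 0
    simp only [Matrix.mul_apply, Matrix.conjTranspose_apply, Fin.sum_univ_two,
      RCLike.star_def] at h
    show W 0 1 0 * w0 + W 0 1 1 * w1 = 0
    rw [hw0, hw1, h]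
    simp [Matrix.one_apply]
  have hφ0 : φf 0 = 1 := by
    show Complex.normSq (y1 0) - Complex.normSq (y2 0) = 1
    rw [hy10, hy20]; simp
  -- derivatives
  have hy1deriv : ∀ x ∈ Icc (0:ℝ) l, HasDerivWithinAt y1 (y1d x) (Icc 0 l) x := by
    intro x hx
    have h00 := entry_deriv (hW x hx) 0 0
    have h01 := entry_deriv (hW x hx) 0 1
    have h := (h00.mul_const w0).add (h01.mul_const w1)
    refine h.congr_deriv (Eq.symm ?_)
    show I*μ*y1 x + (ξ x 0 0 * y1 x + ξ x 0 1 * y2 x) = _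
    simp only [hy1def, hy2def, Matrix.add_apply, Matrix.mul_apply, Matrix.smul_apply, sgnJ,
      Fin.sum_univ_two, Matrix.cons_val', Matrix.cons_val_zero, Matrix.cons_val_one,
      Matrix.head_cons, Matrix.head_fin_const, Matrix.empty_val', Matrix.cons_val_fin_one,
      smul_eq_mul, Matrix.of_apply]
    ring
  have hy2deriv : ∀ x ∈ Icc (0:ℝ) l, HasDerivWithinAt y2 (y2d x) (Icc 0 l) x := by
    intro x hx
    have h10 := entry_deriv (hW x hx) 1 0
    have h11 := entry_deriv (hW x hx) 1 1
    have h := (h10.mul_const w0).add (h11.mul_const w1)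
    refine h.congr_deriv (Eq.symm ?_)
    show -(I*μ)*y2 x + (ξ x 1 0 * y1 x + ξ x 1 1 * y2 x) = _
    simp only [hy1def, hy2def, Matrix.add_apply, Matrix.mul_apply, Matrix.smul_apply, sgnJ,
      Fin.sum_univ_two, Matrix.cons_val', Matrix.cons_val_zero, Matrix.cons_val_one,
      Matrix.head_cons, Matrix.head_fin_const, Matrix.empty_val', Matrix.cons_val_fin_one,
      smul_eq_mul, Matrix.of_apply]
    ring
  have hφderiv : ∀ x ∈ Icc (0:ℝ) l, HasDerivWithinAt φf (φd x) (Icc 0 l) x := by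
    intro x hx
    exact (hasDerivWithinAt_normSq (hy1deriv x hx)).sub (hasDerivWithinAt_normSq (hy2deriv x hx))
  have hDderiv : ∀ x ∈ Icc (0:ℝ) l,
      HasDerivWithinAt Df ((ξ x 0 0 + ξ x 1 1) * Df x) (Icc 0 l) x := by
    intro x hx
    have h00 := entry_deriv (hW x hx) 0 0
    have h01 := entry_deriv (hW x hx) 0 1
    have h10 := entry_deriv (hW x hx) 1 0
    have h11 := entry_deriv (hW x hx) 1 1
    have h := (h00.mul h11).sub (h01.mul h10)
    refine h.congr_deriv (Eq.symm ?_)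
    show (ξ x 0 0 + ξ x 1 1) * (W x 0 0 * W x 1 1 - W x 0 1 * W x 1 0) = _
    simp only [Matrix.add_apply, Matrix.mul_apply, Matrix.smul_apply, sgnJ, Fin.sum_univ_two,
      Matrix.cons_val', Matrix.cons_val_zero, Matrix.cons_val_one, Matrix.head_cons,
      Matrix.head_fin_const, Matrix.empty_val', Matrix.cons_val_fin_one, smul_eq_mul,
      Matrix.of_apply]
    ring
  have hSderiv : ∀ x ∈ Icc (0:ℝ) l, HasDerivWithinAt Sf (Sd x) (Icc 0 l) x := by
    intro x hx
    have hE : HasDerivWithinAt (fun t => Real.exp (-(2*κ)*t))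
        (-(2*κ)*Real.exp (-(2*κ)*x)) (Icc 0 l) x := by
      have h1 : HasDerivAt (fun t : ℝ => -(2*κ)*t) (-(2*κ)) x := by
        refine ((hasDerivAt_id x).const_mul (-(2*κ))).congr_deriv (Eq.symm ?_)
        rw [mul_one]
      have h3 : HasDerivAt (fun t => Real.exp (-(2*κ)*t)) (-(2*κ)*Real.exp (-(2*κ)*x)) x := by
        convert h1.exp using 1
        ring
      exact h3.hasDerivWithinAt
    have hφsq : HasDerivWithinAt (fun t => (φf t)^2) (2*(φf x)*(φd x)) (Icc 0 l) x := by
      have := (hφderiv x hx).pow 2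
      refine this.congr_deriv (Eq.symm ?_)
      ring
    have hns : HasDerivWithinAt (fun t => Complex.normSq (Df t))
        (2*((ξ x 0 0 + ξ x 1 1).re)*Complex.normSq (Df x)) (Icc 0 l) x := by
      have := hasDerivWithinAt_normSq (hDderiv x hx)
      convert this using 1
      rw [conj_mul_self_mul_re]
      ring
    have h := (hφsq.mul hE).sub hns
    refine h.congr_deriv (Eq.symm ?_)
    show (2*(φf x)*(φd x) - 2*κ*(φf x)^2) * Real.exp (-(2*κ)*x)
      - 2*((ξ x 0 0 + ξ x 1 1).re)*Complex.normSq (Df x) = _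
    ring
  -- pointwise estimates
  have hnn_nonneg : ∀ x, 0 ≤ nnf x := fun x =>
    add_nonneg (Complex.normSq_nonneg _) (Complex.normSq_nonneg _)
  have hφ_le_nn : ∀ x, φf x ≤ nnf x := by
    intro x
    show Complex.normSq (y1 x) - Complex.normSq (y2 x)
      ≤ Complex.normSq (y1 x) + Complex.normSq (y2 x)
    have := Complex.normSq_nonneg (y2 x); linarith
  have hφd_eq : ∀ x, φd x = -2*μ.im * nnf x
      + (2*((starRingEnd ℂ) (y1 x) * (ξ x 0 0 * y1 x + ξ x 0 1 * y2 x)).re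
        - 2*((starRingEnd ℂ) (y2 x) * (ξ x 1 0 * y1 x + ξ x 1 1 * y2 x)).re) := by
    intro x
    show 2*((starRingEnd ℂ) (y1 x) * y1d x).re - 2*((starRingEnd ℂ) (y2 x) * y2d x).re = _
    have h1 : y1d x = I*μ*y1 x + (ξ x 0 0 * y1 x + ξ x 0 1 * y2 x) := rfl
    have h2 : y2d x = -(I*μ)*y2 x + (ξ x 1 0 * y1 x + ξ x 1 1 * y2 x) := rfl
    rw [h1, h2, aux_Imu, aux_nImu]
    show _ = -2*μ.im * (Complex.normSq (y1 x) + Complex.normSq (y2 x)) + _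
    ring
  have hN_crude : ∀ x ∈ Icc (0:ℝ) l,
      |2*((starRingEnd ℂ) (y1 x) * (ξ x 0 0 * y1 x + ξ x 0 1 * y2 x)).re
        - 2*((starRingEnd ℂ) (y2 x) * (ξ x 1 0 * y1 x + ξ x 1 1 * y2 x)).re| ≤ 2*c*nnf x := by
    intro x hx
    set E : ℂ := (starRingEnd ℂ) (y1 x) * (ξ x 0 0 * y1 x + ξ x 0 1 * y2 x)
      - (starRingEnd ℂ) (y2 x) * (ξ x 1 0 * y1 x + ξ x 1 1 * y2 x) with hE
    have hval : star ![y1 x, -(y2 x)] ⬝ᵥ (ξ x *ᵥ ![y1 x, y2 x]) = E := by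
      rw [hE]
      simp [dotProduct, Matrix.mulVec, Fin.sum_univ_two, Matrix.cons_val_zero,
        Matrix.cons_val_one, Matrix.head_cons, RCLike.star_def]
      ring
    have hb := dot_bound (ξ x) ![y1 x, -(y2 x)] ![y1 x, y2 x]
    rw [hval] at hb
    simp only [Matrix.cons_val_zero, Matrix.cons_val_one, Matrix.head_cons, norm_neg] at hb
    have hsq1 : ‖y1 x‖^2 = Complex.normSq (y1 x) := by
      rw [Complex.sq_norm]
    have hsq2 : ‖y2 x‖^2 = Complex.normSq (y2 x) := by
      rw [Complex.sq_norm]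
    rw [hsq1, hsq2] at hb
    have hnn : Complex.normSq (y1 x) + Complex.normSq (y2 x) = nnf x := rfl
    rw [hnn, Real.mul_self_sqrt (hnn_nonneg x)] at hb
    have hEre : 2*((starRingEnd ℂ) (y1 x) * (ξ x 0 0 * y1 x + ξ x 0 1 * y2 x)).re
        - 2*((starRingEnd ℂ) (y2 x) * (ξ x 1 0 * y1 x + ξ x 1 1 * y2 x)).re = 2 * E.re := by
      rw [hE, Complex.sub_re]; ring
    rw [hEre, abs_mul]
    have h2 : |(2:ℝ)| = 2 := by norm_num
    rw [h2]
    have h3 : |E.re| ≤ ‖E‖ := Complex.abs_re_le_norm E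
    have h4 : ‖ξ x‖ * nnf x ≤ c * nnf x :=
      mul_le_mul_of_nonneg_right (hcb x hx) (hnn_nonneg x)
    nlinarith
  have hN_fine : ∀ x ∈ Icc (0:ℝ) l,
      -(2*c)*nnf x ≤ (2*((starRingEnd ℂ) (y1 x) * (ξ x 0 0 * y1 x + ξ x 0 1 * y2 x)).re
        - 2*((starRingEnd ℂ) (y2 x) * (ξ x 1 0 * y1 x + ξ x 1 1 * y2 x)).re)
      - (ξ x 0 0 + ξ x 1 1).re * φf x := by
    intro x hx
    have hid := aux_N (ξ x 0 0) (ξ x 0 1) (ξ x 1 0) (ξ x 1 1) (y1 x) (y2 x)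
    have hφx : φf x = Complex.normSq (y1 x) - Complex.normSq (y2 x) := rfl
    have hnnx : nnf x = Complex.normSq (y1 x) + Complex.normSq (y2 x) := rfl
    rw [← hφx, ← hnnx] at hid
    rw [hid]
    -- bound the two terms
    set t : ℝ := (ξ x 0 0 - ξ x 1 1).re with ht
    set s : ℂ := (starRingEnd ℂ) (ξ x 0 1) - ξ x 1 0 with hs
    have hkb := key_bound (ξ x)
    rw [← ht, ← hs] at hkb
    have hkb2 : |t| + ‖s‖ ≤ 2 * c := le_trans hkb (by linarith [hcb x hx])
    have hz : ‖y1 x * (starRingEnd ℂ) (y2 x)‖ = ‖y1 x‖ * ‖y2 x‖ := by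
      rw [norm_mul, RCLike.norm_conj]
    have hre : |(s * (y1 x * (starRingEnd ℂ) (y2 x))).re|
        ≤ ‖s‖ * (‖y1 x‖ * ‖y2 x‖) := by
      calc |(s * (y1 x * (starRingEnd ℂ) (y2 x))).re| ≤ ‖s * (y1 x * (starRingEnd ℂ) (y2 x))‖ :=
            Complex.abs_re_le_norm _
        _ = ‖s‖ * (‖y1 x‖ * ‖y2 x‖) := by rw [norm_mul, hz]
    have hamgm : 2 * (‖y1 x‖ * ‖y2 x‖) ≤ nnf x := by
      have h1 : ‖y1 x‖^2 = Complex.normSq (y1 x) := by rw [Complex.sq_norm]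
      have h2 : ‖y2 x‖^2 = Complex.normSq (y2 x) := by rw [Complex.sq_norm]
      have hnnx2 : nnf x = Complex.normSq (y1 x) + Complex.normSq (y2 x) := rfl
      rw [hnnx2, ← h1, ← h2]
      nlinarith [sq_nonneg (‖y1 x‖ - ‖y2 x‖)]
    have habs1 : -(|t| * nnf x) ≤ t * nnf x := by
      have h5 := mul_le_mul_of_nonneg_right (neg_abs_le t) (hnn_nonneg x)
      have h6 : -|t| * nnf x = -(|t| * nnf x) := by ring
      linarith
    have hcross : -(‖s‖ * nnf x) ≤ 2*(s * (y1 x * (starRingEnd ℂ) (y2 x))).re := by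
      have h6 := (abs_le.mp hre).1
      have h7 := mul_le_mul_of_nonneg_left hamgm (norm_nonneg s)
      have h8 : ‖s‖*(2*(‖y1 x‖*‖y2 x‖)) = 2*(‖s‖*(‖y1 x‖*‖y2 x‖)) := by ring
      linarith
    have h9 := mul_le_mul_of_nonneg_right hkb2 (hnn_nonneg x)
    have h10 : (|t| + ‖s‖) * nnf x = |t| * nnf x + ‖s‖ * nnf x := by ring
    linarith
  have htr_bound : ∀ x ∈ Icc (0:ℝ) l, |(ξ x 0 0 + ξ x 1 1).re| ≤ 2*c := by
    intro x hx
    have h1 : |(ξ x 0 0).re| ≤ ‖ξ x 0 0‖ := Complex.abs_re_le_norm _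
    have h2 : |(ξ x 1 1).re| ≤ ‖ξ x 1 1‖ := Complex.abs_re_le_norm _
    have h3 := entry_bound (ξ x) 0 0
    have h4 := entry_bound (ξ x) 1 1
    have h5 := hcb x hx
    calc |(ξ x 0 0 + ξ x 1 1).re| = |(ξ x 0 0).re + (ξ x 1 1).re| := by rw [Complex.add_re]
      _ ≤ |(ξ x 0 0).re| + |(ξ x 1 1).re| := abs_add_le _ _
      _ ≤ 2*c := by linarith
  have hφd_pos : ∀ x ∈ Icc (0:ℝ) l, κ * nnf x ≤ φd x := by
    intro x hx
    have h1 := hφd_eq x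
    have h2 := (abs_le.mp (hN_crude x hx)).1
    rw [h1, hκ]
    nlinarith [hnn_nonneg x]
  -- φ is nonnegative on [0, l]
  have hφpos : ∀ x ∈ Icc (0:ℝ) l, 0 ≤ φf x := by
    apply nonneg_of_deriv l φf φd hφderiv (by rw [hφ0]; norm_num)
    intro x hx _
    exact le_trans (mul_nonneg hκpos.le (hnn_nonneg x)) (hφd_pos x hx)
  -- determinant of W 0
  have hdetW0 : Complex.normSq (det (W 0)) = 1 := by
    have h := congrArg det hQ0
    rw [Matrix.det_mul, Matrix.det_conjTranspose, Matrix.det_one] at h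
    have h2 : ((Complex.normSq (det (W 0)) : ℝ) : ℂ) = 1 := by
      rw [Complex.normSq_eq_conj_mul_self]
      exact h
    exact_mod_cast h2
  have hS0 : Sf 0 = 0 := by
    show (φf 0)^2 * Real.exp (-(2*κ)*0) - Complex.normSq (Df 0) = 0
    have hD0 : Df 0 = det (W 0) := by
      show W 0 0 0 * W 0 1 1 - W 0 0 1 * W 0 1 0 = det (W 0)
      rw [Matrix.det_fin_two]
    rw [hφ0, hD0, hdetW0]
    norm_num
  -- S is nonnegative on [0, l]
  have hSpos : ∀ x ∈ Icc (0:ℝ) l, 0 ≤ Sf x := by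
    have hg : ∀ x ∈ Icc (0:ℝ) l, 0 ≤ Sf x * Real.exp (-(4*c)*x) := by
      apply nonneg_of_deriv l (fun x => Sf x * Real.exp (-(4*c)*x))
        (fun x => (Sd x - 4*c*Sf x) * Real.exp (-(4*c)*x))
      · intro x hx
        have hE4 : HasDerivWithinAt (fun t => Real.exp (-(4*c)*t))
            (-(4*c)*Real.exp (-(4*c)*x)) (Icc 0 l) x := by
          have h1 : HasDerivAt (fun t : ℝ => -(4*c)*t) (-(4*c)) x := by
            refine ((hasDerivAt_id x).const_mul (-(4*c))).congr_deriv (Eq.symm ?_)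
            rw [mul_one]
          have h3 : HasDerivAt (fun t => Real.exp (-(4*c)*t)) (-(4*c)*Real.exp (-(4*c)*x)) x := by
            convert h1.exp using 1
            ring
          exact h3.hasDerivWithinAt
        have h := (hSderiv x hx).mul hE4
        refine h.congr_deriv (Eq.symm ?_)
        ring
      · rw [hS0]; norm_num
      · intro x hx hneg
        have hexp : 0 < Real.exp (-(4*c)*x) := Real.exp_pos _
        have hSneg : Sf x ≤ 0 := by nlinarith
        have key : 0 ≤ Sd x - 2*((ξ x 0 0 + ξ x 1 1).re)*Sf x := by
          have heq : Sd x - 2*((ξ x 0 0 + ξ x 1 1).re)*Sf x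
              = 2*(φf x)*Real.exp (-(2*κ)*x)
                * (φd x - κ*(φf x) - ((ξ x 0 0 + ξ x 1 1).re)*(φf x)) := by
            show (2*(φf x)*(φd x) - 2*κ*(φf x)^2) * Real.exp (-(2*κ)*x)
                - 2*((ξ x 0 0 + ξ x 1 1).re)*Complex.normSq (Df x)
              - 2*((ξ x 0 0 + ξ x 1 1).re)
                * ((φf x)^2 * Real.exp (-(2*κ)*x) - Complex.normSq (Df x)) = _
            ring
          rw [heq]
          have hfact : 0 ≤ φd x - κ*(φf x) - ((ξ x 0 0 + ξ x 1 1).re)*(φf x) := by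
            have h1 := hN_fine x hx
            have h2 := hφd_eq x
            have h3 := hφ_le_nn x
            have h4 : κ * nnf x ≥ κ * φf x := mul_le_mul_of_nonneg_left h3 hκpos.le
            rw [hκ] at h4 ⊢
            nlinarith [hnn_nonneg x]
          have hφx := hφpos x hx
          positivity
        have htr := htr_bound x hx
        have h6 : 2*((ξ x 0 0 + ξ x 1 1).re)*Sf x ≥ 4*c*Sf x := by
          nlinarith [abs_le.mp htr]
        have h7 : 0 ≤ Sd x - 4*c*Sf x := by nlinarith
        positivity
    intro x hx
    have := hg x hx
    have hexp : 0 < Real.exp (-(4*c)*x) := Real.exp_pos _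
    nlinarith
  -- determinant facts
  have hdetWl : IsUnit (det (W l)) := (Matrix.isUnit_iff_isUnit_det _).mp hWl
  have hDl : Df l = det (W l) := by
    show W l 0 0 * W l 1 1 - W l 0 1 * W l 1 0 = det (W l)
    rw [Matrix.det_fin_two]
  have hDlne : Df l ≠ 0 := by rw [hDl]; exact hdetWl.ne_zero
  have hmulWl : 𝔄 * W l = W 0 := by
    rw [h𝔄, Matrix.mul_assoc, Matrix.nonsing_inv_mul _ hdetWl, Matrix.mul_one]
  have hdet𝔄 : det 𝔄 * det (W l) = det (W 0) := by
    have := congrArg det hmulWl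
    rwa [Matrix.det_mul] at this
  have hAinv : 𝔄 * (W l * (W 0)ᴴ) = 1 := by
    rw [h𝔄, Matrix.mul_assoc, ← Matrix.mul_assoc ((W l)⁻¹), Matrix.nonsing_inv_mul _ hdetWl,
      Matrix.one_mul, hW0unit]
  have hdetne : det 𝔄 ≠ 0 := (Matrix.isUnit_det_of_right_inverse hAinv).ne_zero
  have hYinv : 𝔄⁻¹ = W l * (W 0)ᴴ := Matrix.inv_eq_right_inv hAinv
  have hA11 : 𝔄 1 1 = det 𝔄 * y1 l := by
    have h1 : 𝔄⁻¹ 0 0 = y1 l := by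
      rw [hYinv]
      show (W l * (W 0)ᴴ) 0 0 = W l 0 0 * w0 + W l 0 1 * w1
      rw [hw0, hw1]
      simp [Matrix.mul_apply, Matrix.conjTranspose_apply, Fin.sum_univ_two, RCLike.star_def]
    have h2 : 𝔄⁻¹ 0 0 = (det 𝔄)⁻¹ * 𝔄 1 1 := by
      rw [Matrix.inv_def, Matrix.adjugate_fin_two]
      simp [Matrix.smul_apply, smul_eq_mul]
    rw [h2] at h1
    field_simp at h1
    linear_combination h1
  have hA10 : 𝔄 1 0 = -(det 𝔄) * y2 l := by
    have h1 : 𝔄⁻¹ 1 0 = y2 l := by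
      rw [hYinv]
      show (W l * (W 0)ᴴ) 1 0 = W l 1 0 * w0 + W l 1 1 * w1
      rw [hw0, hw1]
      simp [Matrix.mul_apply, Matrix.conjTranspose_apply, Fin.sum_univ_two, RCLike.star_def]
    have h2 : 𝔄⁻¹ 1 0 = (det 𝔄)⁻¹ * (-(𝔄 1 0)) := by
      rw [Matrix.inv_def, Matrix.adjugate_fin_two]
      simp [Matrix.smul_apply, smul_eq_mul]
    rw [h2] at h1
    field_simp at h1
    linear_combination -h1
  -- the radius estimates
  have hφl0 : 0 ≤ φf l := hφpos l hlmem
  have hSl := hSpos l hlmem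
  have hSl' : Complex.normSq (Df l) ≤ (φf l)^2 * Real.exp (-(2*κ)*l) := by
    have : Sf l = (φf l)^2 * Real.exp (-(2*κ)*l) - Complex.normSq (Df l) := rfl
    linarith [hSl, this ▸ hSl]
  have hφlpos : 0 < φf l := by
    rcases lt_or_eq_of_le hφl0 with h | h
    · exact h
    · exfalso
      have := Complex.normSq_pos.mpr hDlne
      rw [← h] at hSl'
      simp at hSl'
      nlinarith [Real.exp_pos (-(2*κ)*l)]
  have hnormDl : ‖Df l‖ ≤ φf l * Real.exp (-κ*l) := by
    have h1 : ‖Df l‖^2 = Complex.normSq (Df l) := by rw [Complex.sq_norm]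
    have h2 : Real.exp (-(2*κ)*l) = Real.exp (-κ*l) * Real.exp (-κ*l) := by
      rw [← Real.exp_add]; ring_nf
    have h3 : (φf l * Real.exp (-κ*l))^2 = (φf l)^2 * Real.exp (-(2*κ)*l) := by
      rw [h2]; ring
    apply real_le_of_sq_le_sq (mul_nonneg hφl0 (Real.exp_pos (-κ*l)).le)
    rw [h1, h3]
    exact hSl'
  -- norm of det 𝔄
  have hdetnorm : ‖det 𝔄‖ * ‖Df l‖ = 1 := by
    have h1 : ‖det 𝔄 * det (W l)‖ = ‖det (W 0)‖ := by rw [hdet𝔄]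
    have h2 : ‖det (W 0)‖ = 1 := by
      have : ‖det (W 0)‖^2 = 1 := by
        rw [Complex.sq_norm, hdetW0]
      nlinarith [norm_nonneg (det (W 0))]
    rw [norm_mul, h2, ← hDl] at h1
    exact h1
  have hdetpos : 0 < ‖det 𝔄‖ := norm_pos_iff.mpr hdetne
  -- Δ and the disk estimate
  set Δ : ℝ := Complex.normSq (𝔄 1 1) - Complex.normSq (𝔄 1 0) with hΔ
  have hΔeq : Δ = Complex.normSq (det 𝔄) * φf l := by
    rw [hΔ, hA11, hA10]
    have hφfl : φf l = Complex.normSq (y1 l) - Complex.normSq (y2 l) := rfl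
    rw [hφfl]
    simp [Complex.normSq_mul]
    ring
  have hΔpos : 0 < Δ := by
    rw [hΔeq]
    exact mul_pos (Complex.normSq_pos.mpr hdetne) hφlpos
  set B : ℂ := (starRingEnd ℂ) (𝔄 0 1) * 𝔄 1 1 - (starRingEnd ℂ) (𝔄 0 0) * 𝔄 1 0 with hB
  have hdisk : ∀ z : ℂ, ‖z‖ ≤ 1 →
      ‖(Δ:ℂ) * ((𝔄 0 0 * z + 𝔄 0 1) / (𝔄 1 0 * z + 𝔄 1 1)) - (starRingEnd ℂ) B‖
        ≤ ‖det 𝔄‖ := by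
    intro z hz
    have hq := hquad z hz
    have hden : 𝔄 1 0 * z + 𝔄 1 1 ≠ 0 := by
      intro h
      rw [h] at hq
      simp at hq
      nlinarith [Complex.normSq_nonneg (𝔄 0 0 * z + 𝔄 0 1)]
    set ψ : ℂ := (𝔄 0 0 * z + 𝔄 0 1) / (𝔄 1 0 * z + 𝔄 1 1) with hψ
    have hdet2 : det 𝔄 = 𝔄 0 0 * 𝔄 1 1 - 𝔄 0 1 * 𝔄 1 0 := Matrix.det_fin_two 𝔄
    have hid1 : (𝔄 1 1 * ψ - 𝔄 0 1) * (𝔄 1 0 * z + 𝔄 1 1) = z * det 𝔄 := by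
      rw [hψ, hdet2, sub_mul, mul_assoc, div_mul_cancel₀ _ hden]
      ring
    have hid2 : (𝔄 0 0 - 𝔄 1 0 * ψ) * (𝔄 1 0 * z + 𝔄 1 1) = det 𝔄 := by
      rw [hψ, hdet2, sub_mul, mul_assoc, div_mul_cancel₀ _ hden]
      ring
    have hns1 : Complex.normSq (𝔄 1 1 * ψ - 𝔄 0 1) * Complex.normSq (𝔄 1 0 * z + 𝔄 1 1)
        = Complex.normSq z * Complex.normSq (det 𝔄) := by
      rw [← Complex.normSq_mul, hid1, Complex.normSq_mul]
    have hns2 : Complex.normSq (𝔄 0 0 - 𝔄 1 0 * ψ) * Complex.normSq (𝔄 1 0 * z + 𝔄 1 1)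
        = Complex.normSq (det 𝔄) := by
      rw [← Complex.normSq_mul, hid2]
    have hdenpos : 0 < Complex.normSq (𝔄 1 0 * z + 𝔄 1 1) := Complex.normSq_pos.mpr hden
    have hz2 : Complex.normSq z ≤ 1 := by
      rw [Complex.normSq_eq_norm_sq]
      nlinarith [norm_nonneg z]
    have hQle : Complex.normSq (𝔄 1 1 * ψ - 𝔄 0 1) ≤ Complex.normSq (𝔄 0 0 - 𝔄 1 0 * ψ) := by
      have h1 : Complex.normSq (𝔄 1 1 * ψ - 𝔄 0 1) * Complex.normSq (𝔄 1 0 * z + 𝔄 1 1)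
          ≤ Complex.normSq (𝔄 0 0 - 𝔄 1 0 * ψ) * Complex.normSq (𝔄 1 0 * z + 𝔄 1 1) := by
        rw [hns1, hns2]
        nlinarith [Complex.normSq_nonneg (det 𝔄)]
      exact le_of_mul_le_mul_right h1 hdenpos
    have hcs := complete_square (𝔄 0 0) (𝔄 0 1) (𝔄 1 0) (𝔄 1 1) ψ
    rw [← hdet2] at hcs
    have hΔc : ((Complex.normSq (𝔄 1 1) - Complex.normSq (𝔄 1 0) : ℝ) : ℂ) = (Δ:ℂ) := by
      rw [hΔ]
    rw [hΔc] at hcs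
    have hBc : (starRingEnd ℂ) ((starRingEnd ℂ) (𝔄 0 1) * 𝔄 1 1
        - (starRingEnd ℂ) (𝔄 0 0) * 𝔄 1 0) = (starRingEnd ℂ) B := by rw [hB]
    rw [hBc] at hcs
    have hfinal : Complex.normSq ((Δ:ℂ) * ψ - (starRingEnd ℂ) B) ≤ Complex.normSq (det 𝔄) := by
      rw [hcs]
      have : (Complex.normSq (𝔄 1 1) - Complex.normSq (𝔄 1 0))
          * (Complex.normSq (𝔄 1 1 * ψ - 𝔄 0 1) - Complex.normSq (𝔄 0 0 - 𝔄 1 0 * ψ)) ≤ 0 := by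
        apply mul_nonpos_of_nonneg_of_nonpos
        · rw [← hΔ]; exact hΔpos.le
        · linarith
      linarith
    have h1 : ‖(Δ:ℂ) * ψ - (starRingEnd ℂ) B‖^2 ≤ ‖det 𝔄‖^2 := by
      rw [Complex.sq_norm, Complex.sq_norm]
      exact hfinal
    nlinarith [norm_nonneg ((Δ:ℂ) * ψ - (starRingEnd ℂ) B), norm_nonneg (det 𝔄)]
  -- put everything together
  have hq := hquad θ hθ
  have hq' := hquad θ' hθ'
  have hden : 𝔄 1 0 * θ + 𝔄 1 1 ≠ 0 := by
    intro h
    rw [h] at hq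
    simp at hq
    nlinarith [Complex.normSq_nonneg (𝔄 0 0 * θ + 𝔄 0 1)]
  have hden' : 𝔄 1 0 * θ' + 𝔄 1 1 ≠ 0 := by
    intro h
    rw [h] at hq'
    simp at hq'
    nlinarith [Complex.normSq_nonneg (𝔄 0 0 * θ' + 𝔄 0 1)]
  have hlt : ∀ z : ℂ, ‖z‖ ≤ 1 → 𝔄 1 0 * z + 𝔄 1 1 ≠ 0 →
      ‖(𝔄 0 0 * z + 𝔄 0 1) / (𝔄 1 0 * z + 𝔄 1 1)‖ < 1 := by
    intro z hz hd
    rw [norm_div, div_lt_one (norm_pos_iff.mpr hd)]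
    have hqz := hquad z hz
    have h1 : ‖𝔄 0 0 * z + 𝔄 0 1‖^2 < ‖𝔄 1 0 * z + 𝔄 1 1‖^2 := by
      rw [Complex.sq_norm, Complex.sq_norm]
      exact hqz
    nlinarith [norm_nonneg (𝔄 0 0 * z + 𝔄 0 1), norm_nonneg (𝔄 1 0 * z + 𝔄 1 1)]
  refine ⟨hden, hden', hlt θ hθ hden, hlt θ' hθ' hden', ?_⟩
  -- final diameter estimate
  set ψ1 : ℂ := (𝔄 0 0 * θ + 𝔄 0 1) / (𝔄 1 0 * θ + 𝔄 1 1) with hψ1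
  set ψ2 : ℂ := (𝔄 0 0 * θ' + 𝔄 0 1) / (𝔄 1 0 * θ' + 𝔄 1 1) with hψ2
  have hd1 := hdisk θ hθ
  have hd2 := hdisk θ' hθ'
  rw [← hψ1] at hd1
  rw [← hψ2] at hd2
  have htri : ‖(Δ:ℂ) * ψ1 - (Δ:ℂ) * ψ2‖ ≤ 2 * ‖det 𝔄‖ := by
    have h := norm_sub_le ((Δ:ℂ) * ψ1 - (starRingEnd ℂ) B) ((Δ:ℂ) * ψ2 - (starRingEnd ℂ) B)
    have heq : (Δ:ℂ) * ψ1 - (starRingEnd ℂ) B - ((Δ:ℂ) * ψ2 - (starRingEnd ℂ) B)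
        = (Δ:ℂ) * ψ1 - (Δ:ℂ) * ψ2 := by ring
    rw [heq] at h
    linarith
  have hfac : ‖(Δ:ℂ) * ψ1 - (Δ:ℂ) * ψ2‖ = Δ * ‖ψ1 - ψ2‖ := by
    rw [show (Δ:ℂ) * ψ1 - (Δ:ℂ) * ψ2 = (Δ:ℂ) * (ψ1 - ψ2) by ring, norm_mul,
      Complex.norm_real, Real.norm_eq_abs, _root_.abs_of_pos hΔpos]
  rw [hfac] at htri
  -- Δ ‖ψ1 - ψ2‖ ≤ 2 ‖det 𝔄‖ and Δ = ‖det 𝔄‖² φf l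
  have hΔeq2 : Δ = ‖det 𝔄‖^2 * φf l := by
    rw [hΔeq, Complex.sq_norm]
  have hbound : ‖ψ1 - ψ2‖ ≤ 2 * Real.exp (-κ*l) := by
    have hk : ‖det 𝔄‖ * ‖Df l‖ = 1 := hdetnorm
    have hD0 : 0 ≤ ‖Df l‖ := norm_nonneg _
    have hexp : 0 < Real.exp (-κ*l) := Real.exp_pos _
    -- from htri : ‖ψ1-ψ2‖ * (‖det‖² φl) ≤ 2‖det‖ ... rearranged
    have h1 : ‖ψ1 - ψ2‖ * (‖det 𝔄‖^2 * φf l) ≤ 2 * ‖det 𝔄‖ := by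
      rw [← hΔeq2]
      calc ‖ψ1 - ψ2‖ * Δ = Δ * ‖ψ1 - ψ2‖ := by ring
        _ ≤ 2 * ‖det 𝔄‖ := htri
    -- ‖Df l‖ = 1/‖det‖ ≤ φl exp(-κl) → 1 ≤ ‖det‖ φl exp(-κl)
    have h2 : 1 ≤ ‖det 𝔄‖ * (φf l * Real.exp (-κ*l)) := by
      calc 1 = ‖det 𝔄‖ * ‖Df l‖ := hk.symm
        _ ≤ ‖det 𝔄‖ * (φf l * Real.exp (-κ*l)) :=
          mul_le_mul_of_nonneg_left hnormDl hdetpos.le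
    nlinarith [norm_nonneg (ψ1 - ψ2), mul_pos hdetpos hφlpos,
      mul_le_mul_of_nonneg_right h1 hexp.le,
      mul_le_mul_of_nonneg_left h2 (mul_nonneg (norm_nonneg (ψ1 - ψ2)) hdetpos.le)]
  have hmono : Real.exp (-κ*l) ≤ Real.exp ((2 * μ.im + M / 2) * l) := by
    apply Real.exp_le_exp.mpr
    rw [hκ]
    have : 2*c ≤ M/2 := by linarith
    nlinarith [hl.le]
  calc ‖ψ1 - ψ2‖ ≤ 2 * Real.exp (-κ*l) := hbound
    _ ≤ 2 * Real.exp ((2 * μ.im + M / 2) * l) := by linarith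
end
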